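/- Let f : ℝ^n → ℝ be convex and differentiable, X ⊆ ℝ^n convex, and h : ℝ^n → ℝ convex and differentiable with Bregman distance D_h. Suppose f attains its minimum f* on X with nonempty solution set X*, and for each x ∈ X the point x̄ := argmin_{y∈X*} D_h(y,x) exists and is unique. Suppose L > 0 satisfies D_f(y,x) ≤ L·D_h(y,x) for all x,y ∈ X, and μ > 0 satisfies D_f(x̄,x) ≥ μ·D_h(x̄,x) for all x ∈ X. If x ∈ X and x₊ minimizes y ↦ f(x) + ⟨∇f(x), y − x⟩ + L·D_h(y,x) over y ∈ X, then f(x₊) − f* ≤ (L − μ)·D_h(x̄,x) − L·D_h(x̄,x₊). -/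

import Mathlib

noncomputable section
open scoped RealInnerProductSpace
open Set

lemma aux_grad {E : Type*} [NormedAddCommGroup E] [InnerProductSpace ℝ E] [CompleteSpace E]
    (c L : ℝ) (a : E) (h : E → ℝ) (h' : E → E) (hh : ∀ z, HasGradientAt h (h' z) z) (p : E) :
    HasGradientAt (fun y => c + ⟪a, y⟫ + L * h y) (a + L • h' p) p := by
  have H : HasFDerivAt (fun y => c + ⟪a, y⟫ + L * h y)
      ((InnerProductSpace.toDual ℝ E a : E →L[ℝ] ℝ) + L • (InnerProductSpace.toDual ℝ E (h' p) : E →L[ℝ] ℝ)) p := by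
    have h1 : HasFDerivAt (fun y : E => ⟪a, y⟫) (InnerProductSpace.toDual ℝ E a : E →L[ℝ] ℝ) p := by
      exact (InnerProductSpace.toDual ℝ E a).hasFDerivAt (x := p)
    have h2 := ((hh p).hasFDerivAt).const_mul L
    exact (h1.const_add c).add h2
  have := H.hasGradientAt
  simpa using this

lemma aux_first_order {E : Type*} [NormedAddCommGroup E] [InnerProductSpace ℝ E]
    [CompleteSpace E] {X : Set E} (hX : Convex ℝ X) {ψ : E → ℝ} {g p : E}
    (hp : p ∈ X) (hgrad : HasGradientAt ψ g p)
    (hmin : ∀ y ∈ X, ψ p ≤ ψ y) {y : E} (hy : y ∈ X) :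
    0 ≤ ⟪g, y - p⟫ := by
  set d := y - p with hd
  have h1 : HasDerivAt (fun t : ℝ => p + t • d) d 0 := by
    simpa using ((hasDerivAt_id (0:ℝ)).smul_const d).const_add p
  have hp' : HasFDerivAt ψ (InnerProductSpace.toDual ℝ E g : E →L[ℝ] ℝ) (p + (0:ℝ) • d) := by
    simpa using hgrad.hasFDerivAt
  have hline : HasDerivAt (fun t : ℝ => ψ (p + t • d)) ⟪g, d⟫ 0 := by
    exact hp'.comp_hasDerivAt (0:ℝ) h1
  have htend : Filter.Tendsto (fun t : ℝ => (ψ (p + t • d) - ψ p) / t) (nhdsWithin 0 (Set.Ioi 0)) (nhds ⟪g, d⟫) := by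
    have h2 := (hasDerivAt_iff_tendsto_slope.1 hline).mono_left
      (nhdsWithin_mono 0 (fun t (ht : t ∈ Set.Ioi (0:ℝ)) => ne_of_gt ht : Set.Ioi (0:ℝ) ⊆ {(0:ℝ)}ᶜ))
    refine h2.congr' ?_
    filter_upwards [self_mem_nhdsWithin] with t ht
    simp [slope_def_field]
  have hev : ∀ᶠ t in nhdsWithin (0:ℝ) (Set.Ioi 0), 0 ≤ (ψ (p + t • d) - ψ p) / t := by
    filter_upwards [Ioc_mem_nhdsGT_of_mem (Set.left_mem_Ico.2 one_pos)] with t ht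
    have hmem : p + t • d ∈ X := by
      have := hX hp hy (by linarith [ht.2] : (0:ℝ) ≤ 1 - t) ht.1.le (by ring)
      convert this using 1
      rw [hd]
      module
    exact div_nonneg (sub_nonneg.2 (hmin _ hmem)) ht.1.le
  exact ge_of_tendsto htend hev

/-- Lemma lemma.crux.mirror: one step of mirror descent satisfies
f(x₊) − f* ≤ (L − μ)·D_h(x̄,x) − L·D_h(x̄,x₊). -/
theorem mirror_descent_step_decrease {n : ℕ}
    (f : EuclideanSpace ℝ (Fin n) → ℝ)
    (f' : EuclideanSpace ℝ (Fin n) → EuclideanSpace ℝ (Fin n))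
    (hfconv : ConvexOn ℝ Set.univ f)
    (hfdiff : ∀ x, HasGradientAt f (f' x) x)
    (X : Set (EuclideanSpace ℝ (Fin n))) (hX : Convex ℝ X)
    (h : EuclideanSpace ℝ (Fin n) → ℝ)
    (h' : EuclideanSpace ℝ (Fin n) → EuclideanSpace ℝ (Fin n))
    (hhconv : ConvexOn ℝ Set.univ h)
    (hhdiff : ∀ x, HasGradientAt h (h' x) x)
    (Dh : EuclideanSpace ℝ (Fin n) → EuclideanSpace ℝ (Fin n) → ℝ)
    (hDh : ∀ y x, Dh y x = h y - h x - ⟪h' x, y - x⟫)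
    (fstar : ℝ)
    (hmin : ∃ z ∈ X, f z = fstar ∧ ∀ y ∈ X, fstar ≤ f y)
    (Xstar : Set (EuclideanSpace ℝ (Fin n)))
    (hXstar : Xstar = {x | x ∈ X ∧ f x = fstar})
    (xbar : EuclideanSpace ℝ (Fin n) → EuclideanSpace ℝ (Fin n))
    (hbar : ∀ x ∈ X, xbar x ∈ Xstar ∧ ∀ y ∈ Xstar, Dh (xbar x) x ≤ Dh y x)
    (hbar_unique : ∀ x ∈ X, ∀ y ∈ Xstar, (∀ z ∈ Xstar, Dh y x ≤ Dh z x) → y = xbar x)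
    (L : ℝ) (hL : 0 < L)
    (hsmooth : ∀ x ∈ X, ∀ y ∈ X, f y - f x - ⟪f' x, y - x⟫ ≤ L * Dh y x)
    (μ : ℝ) (hμ : 0 < μ)
    (hquasi : ∀ x ∈ X, μ * Dh (xbar x) x ≤ f (xbar x) - f x - ⟪f' x, xbar x - x⟫)
    (x : EuclideanSpace ℝ (Fin n)) (hx : x ∈ X)
    (xplus : EuclideanSpace ℝ (Fin n)) (hxplus : xplus ∈ X)
    (hxplus_min : ∀ y ∈ X,
      f x + ⟪f' x, xplus - x⟫ + L * Dh xplus x ≤ f x + ⟪f' x, y - x⟫ + L * Dh y x) :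
    f xplus - fstar ≤ (L - μ) * Dh (xbar x) x - L * Dh (xbar x) xplus := by
  set a : EuclideanSpace ℝ (Fin n) := f' x - L • h' x with ha
  set c : ℝ := f x - ⟪f' x, x⟫ - L * h x + L * ⟪h' x, x⟫ with hc
  -- the objective equals c + ⟪a, y⟫ + L * h y
  have hfun : ∀ y : EuclideanSpace ℝ (Fin n), f x + ⟪f' x, y - x⟫ + L * Dh y x = c + ⟪a, y⟫ + L * h y := by
    intro y
    rw [hDh, hc, ha]
    simp [inner_sub_right, inner_sub_left, real_inner_smul_left, mul_assoc, ← Finset.mul_sum]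
    ring
  have hgrad := aux_grad c L a h h' hhdiff xplus
  have hmin' : ∀ y ∈ X, c + ⟪a, xplus⟫ + L * h xplus ≤ c + ⟪a, y⟫ + L * h y := by
    intro y hy
    have := hxplus_min y hy
    rw [hfun xplus, hfun y] at this
    exact this
  -- xbar x ∈ X and f (xbar x) = fstar
  obtain ⟨hbmem, -⟩ := hbar x hx
  rw [hXstar] at hbmem
  obtain ⟨hbX, hbval⟩ := hbmem
  -- first-order optimality of xplus applied at xbar x
  have hopt : 0 ≤ ⟪a + L • h' xplus, xbar x - xplus⟫ :=
    aux_first_order hX hxplus hgrad hmin' hbX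
  have hopt' : 0 ≤ ⟪f' x, xbar x - xplus⟫ - L * ⟪h' x, xbar x - xplus⟫
      + L * ⟪h' xplus, xbar x - xplus⟫ := by
    have : ⟪a + L • h' xplus, xbar x - xplus⟫ = ⟪f' x, xbar x - xplus⟫
        - L * ⟪h' x, xbar x - xplus⟫ + L * ⟪h' xplus, xbar x - xplus⟫ := by
      rw [ha]; simp [inner_add_left, inner_sub_left, real_inner_smul_left, mul_assoc, ← Finset.mul_sum]
    linarith [hopt, this.ge, this.le]
  -- inner product splittings
  have i1 : ⟪h' x, xbar x - x⟫ = ⟪h' x, xbar x - xplus⟫ + ⟪h' x, xplus - x⟫ := by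
    rw [← inner_add_right]; congr 1; module
  have i2 : ⟪f' x, xbar x - x⟫ = ⟪f' x, xbar x - xplus⟫ + ⟪f' x, xplus - x⟫ := by
    rw [← inner_add_right]; congr 1; module
  have i1L : L * ⟪h' x, xbar x - x⟫ = L * ⟪h' x, xbar x - xplus⟫ + L * ⟪h' x, xplus - x⟫ := by
    rw [i1]; ring
  -- Bregman expansions multiplied by L
  have e1 : L * Dh (xbar x) x = L * h (xbar x) - L * h x - L * ⟪h' x, xbar x - x⟫ := by
    rw [hDh]; ring
  have e2 : L * Dh (xbar x) xplus
      = L * h (xbar x) - L * h xplus - L * ⟪h' xplus, xbar x - xplus⟫ := by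
    rw [hDh]; ring
  have e3 : L * Dh xplus x = L * h xplus - L * h x - L * ⟪h' x, xplus - x⟫ := by
    rw [hDh]; ring
  have hkey : ⟪f' x, xplus - x⟫ + L * Dh xplus x
      ≤ ⟪f' x, xbar x - x⟫ + L * Dh (xbar x) x - L * Dh (xbar x) xplus := by
    linarith [hopt', i1L, e1, e2, e3, i2]
  have hs : f xplus - f x - ⟪f' x, xplus - x⟫ ≤ L * Dh xplus x := hsmooth x hx xplus hxplus
  have hq : μ * Dh (xbar x) x ≤ f (xbar x) - f x - ⟪f' x, xbar x - x⟫ := hquasi x hx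
  have hring : (L - μ) * Dh (xbar x) x = L * Dh (xbar x) x - μ * Dh (xbar x) x := by ring
  linarith [hs, hq, hkey, hring, hbval.ge, hbval.le]
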